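/- Let a, λ, E, L, K, r₀ ∈ ℝ with a ≠ 0 and E ≠ 0. Set χ = 1 + a²λ and suppose χ ≠ 0. Let Δ(r) = (1 − λr²)(r² + a²) − 2r with derivative Δ'(r) = 2r(1 − λr²) − 2λr(r² + a²) − 2, and let R(r) = χ²((r² + a²)E − aL)² − K·Δ(r) with derivative R'(r) = 4χ²rE((r² + a²)E − aL) − K·Δ'(r). Suppose Δ'(r₀) ≠ 0, (r₀² + a²)E − aL ≠ 0, R(r₀) = 0 and R'(r₀) = 0. Then L/E = ((r₀² + a²)Δ'(r₀) − 4r₀Δ(r₀)) / (a Δ'(r₀)) and K/(χ²E²) = 16 r₀² Δ(r₀) / Δ'(r₀)². -/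
import Mathlib


/-- Solving the double-root conditions `R(r₀) = R'(r₀) = 0` of the Kerr–de Sitter radial
null-geodesic potential for the rescaled constants `l = L/E` and `k = K/(χ²E²)`. -/
theorem double_root_determines_rescaled_constants
    (a lam E L K r₀ : ℝ) (ha : a ≠ 0) (hE : E ≠ 0)
    (χ : ℝ) (hχ : χ = 1 + a ^ 2 * lam) (hχ0 : χ ≠ 0)
    (Δ Δ' R R' : ℝ → ℝ)
    (hΔ : ∀ r, Δ r = (1 - lam * r ^ 2) * (r ^ 2 + a ^ 2) - 2 * r)
    (hΔ' : ∀ r, Δ' r = 2 * r * (1 - lam * r ^ 2) - 2 * lam * r * (r ^ 2 + a ^ 2) - 2)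
    (hR : ∀ r, R r = χ ^ 2 * ((r ^ 2 + a ^ 2) * E - a * L) ^ 2 - K * Δ r)
    (hR' : ∀ r, R' r = 4 * χ ^ 2 * r * E * ((r ^ 2 + a ^ 2) * E - a * L) - K * Δ' r)
    (hΔ'0 : Δ' r₀ ≠ 0) (hP : (r₀ ^ 2 + a ^ 2) * E - a * L ≠ 0)
    (h0 : R r₀ = 0) (h1 : R' r₀ = 0) :
    L / E = ((r₀ ^ 2 + a ^ 2) * Δ' r₀ - 4 * r₀ * Δ r₀) / (a * Δ' r₀) ∧
    K / (χ ^ 2 * E ^ 2) = 16 * r₀ ^ 2 * Δ r₀ / (Δ' r₀) ^ 2 := by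
  have e0 := h0; rw [hR] at e0
  have e1 := h1; rw [hR'] at e1
  have h2 : χ ^ 2 * ((r₀ ^ 2 + a ^ 2) * E - a * L) *
      (((r₀ ^ 2 + a ^ 2) * E - a * L) * Δ' r₀ - 4 * r₀ * E * Δ r₀) = 0 := by
    linear_combination e0 * Δ' r₀ - e1 * Δ r₀
  have hne : χ ^ 2 * ((r₀ ^ 2 + a ^ 2) * E - a * L) ≠ 0 :=
    mul_ne_zero (pow_ne_zero 2 hχ0) hP
  have key : ((r₀ ^ 2 + a ^ 2) * E - a * L) * Δ' r₀ = 4 * r₀ * E * Δ r₀ := by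
    have := (mul_eq_zero.1 h2).resolve_left hne
    linarith [this]
  have hK : K * Δ' r₀ ^ 2 = 16 * χ ^ 2 * r₀ ^ 2 * E ^ 2 * Δ r₀ := by
    linear_combination 4 * χ ^ 2 * r₀ * E * key - e1 * Δ' r₀
  constructor
  · field_simp
    linear_combination -key
  · field_simp
    linear_combination hK
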